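/- Let M, N be finitely generated modules over a complete Noetherian local ring (R, m) of characteristic p over an algebraically closed residue field k, each with the m-adic filtration F_iM = m^i M, F_iN = m^i N. Let φ : M → N be an additive map of the form φ = A - B where B is R-linear with all graded pieces gr_i(B) surjective, and A satisfies A(F_iM) ⊆ F_{pi}N (so gr_i(A) = 0 for i > 0) and gr_0(A) is Frobenius-semilinear over k. Then φ is surjective. -/

import Mathlib

set_option maxHeartbeats 1000000

open IsLocalRing Polynomial Finset

section Stmt8Aux

variable {p : ℕ} {k : Type*} [Field k] [CharP k p] [IsAlgClosed k]

private lemma stmt8_coeff_one_pow_char (hp : p.Prime) (f : k[X]) : (f ^ p).coeff 1 = 0 := by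
  haveI : Fact p.Prime := ⟨hp⟩
  rw [← map_frobenius_expand (p := p) f, coeff_map, coeff_expand hp.pos]
  rw [if_neg (by simp [Nat.dvd_one, hp.ne_one])]
  simp

private lemma stmt8_exists_coeffs (hp : p.Prime) (d : ℕ) (c : ℕ → k) :
    ∃ a : ℕ → k,
      a 0 = c 0 * (a (d - 1)) ^ p - 1 ∧
      ∀ i, 1 ≤ i → i ≤ d - 1 → a i = (a (i - 1)) ^ p + c i * (a (d - 1)) ^ p := by
  haveI : Fact p.Prime := ⟨hp⟩
  let q : ℕ → k[X] := fun i => Nat.rec (C (c 0) * X ^ p - 1)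
      (fun j qj => qj ^ p + C (c (j + 1)) * X ^ p) i
  have hq0 : q 0 = C (c 0) * X ^ p - 1 := rfl
  have hqs : ∀ j, q (j + 1) = (q j) ^ p + C (c (j + 1)) * X ^ p := fun j => rfl
  have hcoeff : ∀ i, (q i).coeff 1 = 0 := by
    intro i; induction i with
    | zero =>
      rw [hq0]
      simp only [coeff_sub, coeff_C_mul, coeff_X_pow, coeff_one]
      rw [if_neg hp.one_lt.ne, if_neg (by norm_num : ¬(1:ℕ) = 0)]
      ring
    | succ j ih =>
      rw [hqs]
      simp [stmt8_coeff_one_pow_char hp, coeff_X_pow, hp.one_lt.ne']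
  have hQc : (q (d - 1) - X).coeff 1 = -1 := by
    simp [hcoeff]
  have hQne : (q (d - 1) - X).coeff 1 ≠ 0 := by rw [hQc]; norm_num
  have hdeg : (q (d - 1) - X).degree ≠ 0 := by
    have h1 : 1 ≤ (q (d - 1) - X).natDegree := le_natDegree_of_ne_zero hQne
    have h0 : 0 < (q (d - 1) - X).degree := natDegree_pos_iff_degree_pos.mp h1
    exact h0.ne'
  obtain ⟨t, ht⟩ := IsAlgClosed.exists_root _ hdeg
  have hteval : (q (d - 1)).eval t = t := by
    have := ht
    rw [IsRoot.def, eval_sub, eval_X, sub_eq_zero] at this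
    exact this
  refine ⟨fun i => (q i).eval t, ?_, ?_⟩
  · show (q 0).eval t = c 0 * ((q (d - 1)).eval t) ^ p - 1
    rw [hteval, hq0]
    simp
  · intro i h1 h2
    show (q i).eval t = ((q (i - 1)).eval t) ^ p + c i * ((q (d - 1)).eval t) ^ p
    rw [hteval]
    conv_lhs => rw [show i = (i - 1) + 1 from (Nat.succ_pred_eq_of_pos h1).symm, hqs]
    simp only [eval_add, eval_pow, eval_mul, eval_C, eval_X, Nat.succ_pred_eq_of_pos h1]
    have hii : i - 1 + 1 = i := by omega
    rw [hii]

private lemma stmt8_lang_surj (hp : p.Prime) {W : Type*} [AddCommGroup W] [Module k W]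
    [Module.Finite k W] (F : W → W)
    (hFadd : ∀ x y, F (x + y) = F x + F y)
    (hFsmul : ∀ (a : k) (x : W), F (a • x) = a ^ p • F x) (n : W) :
    ∃ u : W, F u - u = n := by
  classical
  have hF0 : F 0 = 0 := by
    have h := hFsmul 0 0
    rw [zero_smul, zero_pow hp.ne_zero, zero_smul] at h
    exact h
  set v : ℕ → W := fun i => F^[i] n with hv
  have hvsucc : ∀ i, v (i + 1) = F (v i) := fun i => Function.iterate_succ_apply' F i n
  have hv0 : v 0 = n := rfl
  -- main reduction: a linear recurrence for the iterates gives a solution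
  have main : ∀ (d : ℕ) (c : ℕ → k), v d = (∑ j ∈ Finset.range d, c j • v j) →
      ∃ u, F u - u = n := by
    intro d c hvd
    match d with
    | 0 =>
      have hn : n = 0 := by simpa [hv0] using hvd
      exact ⟨0, by rw [hF0, sub_zero, hn]⟩
    | e + 1 =>
      obtain ⟨a, ha0, hai⟩ := stmt8_exists_coeffs hp (e + 1) c
      simp only [Nat.add_sub_cancel] at ha0 hai
      refine ⟨∑ j ∈ Finset.range (e + 1), a j • v j, ?_⟩
      have hFu : F (∑ j ∈ Finset.range (e + 1), a j • v j)
          = ∑ j ∈ Finset.range (e + 1), (a j) ^ p • v (j + 1) := by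
        let F' : W →+ W := AddMonoidHom.mk' F hFadd
        show F' _ = _
        rw [map_sum]
        exact Finset.sum_congr rfl fun j _ => by
          show F _ = _
          rw [hFsmul, hvsucc]
      rw [hFu]
      suffices hkey : ∑ j ∈ Finset.range (e + 1), (a j) ^ p • v (j + 1)
          = (∑ j ∈ Finset.range (e + 1), a j • v j) + n by
        rw [hkey, add_sub_cancel_left]
      have hA : ∑ j ∈ Finset.range (e + 1), (a j) ^ p • v (j + 1)
          = ∑ j ∈ Finset.range (e + 1),
              (((if j = 0 then (0:k) else (a (j - 1)) ^ p) + (a e) ^ p * c j) • v j) := by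
        simp only [add_smul, Finset.sum_add_distrib]
        rw [Finset.sum_range_succ (fun j => (a j) ^ p • v (j + 1)) e]
        congr 1
        · rw [Finset.sum_range_succ'
            (fun j => (if j = 0 then (0:k) else (a (j - 1)) ^ p) • v j) e]
          simp
        · rw [hvd, Finset.smul_sum]
          simp only [smul_smul]
      have hB : (∑ j ∈ Finset.range (e + 1), a j • v j) + n
          = ∑ j ∈ Finset.range (e + 1),
              ((a j + (if j = 0 then (1:k) else 0)) • v j) := by
        simp only [add_smul, Finset.sum_add_distrib]
        congr 1
        rw [Finset.sum_range_succ'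
          (fun j => (if j = 0 then (1:k) else 0) • v j) e]
        simp [hv0]
      rw [hA, hB]
      refine Finset.sum_congr rfl fun j hj => ?_
      rcases j with _ | i
      · rw [if_pos rfl, if_pos rfl, ha0]
        ring_nf
      · have hj' := Finset.mem_range.mp hj
        rw [if_neg (Nat.succ_ne_zero i), if_neg (Nat.succ_ne_zero i),
          hai (i + 1) (by omega) (by omega)]
        simp only [Nat.add_sub_cancel]
        ring
  -- extract a linear recurrence from finite-dimensionality
  set D := Module.finrank k W with hD
  have hnli : ¬ LinearIndependent k (fun i : Fin (D + 1) => v i) := by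
    intro h
    have hcard := h.fintype_card_le_finrank
    simp [← hD] at hcard
  obtain ⟨g, hgsum, i₀, hgi₀⟩ := Fintype.not_linearIndependent_iff.mp hnli
  set g' : ℕ → k := fun j => if h : j < D + 1 then g ⟨j, h⟩ else 0 with hg'
  have hsum' : ∑ j ∈ Finset.range (D + 1), g' j • v j = 0 := by
    rw [← Fin.sum_univ_eq_sum_range (fun j => g' j • v j) (D + 1)]
    rw [← hgsum]
    refine Finset.sum_congr rfl fun i _ => ?_
    simp [hg', i.isLt, Nat.lt_succ_iff.mp i.isLt]
  set s : Finset (Fin (D + 1)) := Finset.univ.filter (fun i => g i ≠ 0) with hsdef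
  have hsne : s.Nonempty := ⟨i₀, by simp [hsdef, hgi₀]⟩
  set dF := s.max' hsne with hdF
  have hgdF : g dF ≠ 0 := by
    have := s.max'_mem hsne
    simpa [hsdef] using this
  have hup : ∀ i : Fin (D + 1), dF < i → g i = 0 := by
    intro i hi
    by_contra hne
    exact absurd (s.le_max' i (by simp [hsdef, hne])) (not_le.mpr hi)
  set d := (dF : ℕ) with hd
  have hg'd : g' d ≠ 0 := by
    have : (⟨d, dF.isLt⟩ : Fin (D + 1)) = dF := by ext; rfl
    simpa [hg', dF.isLt, (show d ≤ D from Nat.lt_succ_iff.mp dF.isLt), this] using hgdF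
  have hsum2 : ∑ j ∈ Finset.range (d + 1), g' j • v j = 0 := by
    rw [← hsum']
    refine Finset.sum_subset (Finset.range_subset_range.mpr dF.isLt) fun x hx hnx => ?_
    have hx1 : x < D + 1 := Finset.mem_range.mp hx
    have hx2 : d < x := by
      simp only [Finset.mem_range] at hnx
      omega
    have : g ⟨x, hx1⟩ = 0 := hup ⟨x, hx1⟩ (by exact hx2)
    simp [hg', hx1, this]
  rw [Finset.sum_range_succ] at hsum2
  have hvd : v d = ∑ j ∈ Finset.range d, ((g' d)⁻¹ * (-(g' j))) • v j := by
    have h1 : g' d • v d = ∑ j ∈ Finset.range d, (-(g' j)) • v j := by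
      simp only [neg_smul, Finset.sum_neg_distrib]
      rw [eq_neg_iff_add_eq_zero, add_comm]
      exact hsum2
    calc v d = (g' d)⁻¹ • (g' d • v d) := by rw [inv_smul_smul₀ hg'd]
      _ = ∑ j ∈ Finset.range d, ((g' d)⁻¹ * (-(g' j))) • v j := by
          rw [h1, Finset.smul_sum]
          simp only [smul_smul]
  exact main d _ hvd

private lemma stmt8_key_surj (hp : p.Prime) {V W : Type*} [AddCommGroup V] [Module k V]
    [AddCommGroup W] [Module k W] [Module.Finite k W]
    (A : V → W) (hAadd : ∀ x y, A (x + y) = A x + A y)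
    (hAsmul : ∀ (a : k) (x : V), A (a • x) = a ^ p • A x)
    (B : V →ₗ[k] W) (hB : Function.Surjective B) (n : W) :
    ∃ v : V, A v - B v = n := by
  obtain ⟨s, hs⟩ := B.exists_rightInverse_of_surjective (LinearMap.range_eq_top.2 hB)
  obtain ⟨u, hu⟩ := stmt8_lang_surj hp (fun w => A (s w))
    (fun x y => by rw [map_add, hAadd]) (fun a x => by rw [map_smul, hAsmul]) n
  refine ⟨s u, ?_⟩
  have hBs : B (s u) = u := by
    have := LinearMap.ext_iff.mp hs u
    simpa using this
  rw [hBs]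
  exact hu

end Stmt8Aux

section Stmt8Part1

private lemma stmt8_part1 {p : ℕ} (hp : p.Prime) {R : Type*} [CommRing R] [IsLocalRing R]
    [CharP R p] [IsAlgClosed (ResidueField R)]
    {M N : Type*} [AddCommGroup M] [AddCommGroup N] [Module R M] [Module R N]
    [Module.Finite R N]
    (A : M →+ N) (B : M →ₗ[R] N)
    (hAfilt : ∀ x ∈ (maximalIdeal R • ⊤ : Submodule R M),
      A x ∈ (maximalIdeal R • ⊤ : Submodule R N))
    (hAsemi : ∀ (r : R) (x : M), A (r • x) - r ^ p • A x ∈ (maximalIdeal R • ⊤ : Submodule R N))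
    (hB0 : ∀ n : N, ∃ x : M, B x - n ∈ (maximalIdeal R • ⊤ : Submodule R N))
    (n : N) : ∃ x : M, A x - B x - n ∈ (maximalIdeal R • ⊤ : Submodule R N) := by
  classical
  haveI : Fact p.Prime := ⟨hp⟩
  haveI hCharK : CharP (ResidueField R) p := by
    have h0 : ((p : ℕ) : ResidueField R) = 0 := by
      rw [← map_natCast (IsLocalRing.residue R) p, CharP.cast_eq_zero R p, map_zero]
    have hdvd := ringChar.dvd h0
    rcases hp.eq_one_or_self_of_dvd _ hdvd with h | h
    · exact absurd h CharP.ringChar_ne_one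
    · exact ringChar.of_eq h
  letI instV : Module (ResidueField R) (M ⧸ (maximalIdeal R • ⊤ : Submodule R M)) :=
    inferInstanceAs (Module (R ⧸ maximalIdeal R) (M ⧸ (maximalIdeal R • ⊤ : Submodule R M)))
  letI instW : Module (ResidueField R) (N ⧸ (maximalIdeal R • ⊤ : Submodule R N)) :=
    inferInstanceAs (Module (R ⧸ maximalIdeal R) (N ⧸ (maximalIdeal R • ⊤ : Submodule R N)))
  haveI : Module.Finite (ResidueField R) (N ⧸ (maximalIdeal R • ⊤ : Submodule R N)) := by
    obtain ⟨s, hs⟩ := Module.finite_def.mp ‹Module.Finite R N›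
    refine Module.Finite.of_fg_top ⟨s.image (Submodule.Quotient.mk
      (p := (maximalIdeal R • ⊤ : Submodule R N))), ?_⟩
    rw [eq_top_iff]
    rintro w -
    obtain ⟨x, rfl⟩ := Submodule.Quotient.mk_surjective _ w
    have hx : x ∈ Submodule.span R (s : Set N) := by rw [hs]; trivial
    refine Submodule.span_induction (p := fun x _ =>
      (Submodule.Quotient.mk x : N ⧸ (maximalIdeal R • ⊤ : Submodule R N)) ∈
      Submodule.span (ResidueField R)
        ((s.image (Submodule.Quotient.mk (p := (maximalIdeal R • ⊤ : Submodule R N)))) : Set _))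
      ?_ ?_ ?_ ?_ hx
    · intro y hy
      exact Submodule.subset_span (Finset.mem_coe.mpr (Finset.mem_image_of_mem _ hy))
    · exact Submodule.zero_mem _
    · intro y z _ _ hy hz
      exact Submodule.add_mem _ hy hz
    · intro r y _ hy
      have : (Submodule.Quotient.mk (r • y) :
          N ⧸ (maximalIdeal R • ⊤ : Submodule R N)) = IsLocalRing.residue R r •
          Submodule.Quotient.mk y := rfl
      rw [this]
      exact Submodule.smul_mem _ _ hy
  -- the reduced linear map
  have hBle : (maximalIdeal R • ⊤ : Submodule R M) ≤
      (maximalIdeal R • ⊤ : Submodule R N).comap B := by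
    rw [← Submodule.map_le_iff_le_comap, Submodule.map_smul'']
    exact smul_mono_right _ le_top
  set B0 : (M ⧸ (maximalIdeal R • ⊤ : Submodule R M)) →ₗ[R]
      (N ⧸ (maximalIdeal R • ⊤ : Submodule R N)) := Submodule.mapQ _ _ B hBle with hB0def
  have hB0mk : ∀ y : M, B0 (Submodule.Quotient.mk y) = Submodule.Quotient.mk (B y) :=
    fun y => Submodule.mapQ_apply _ _ B y
  have hsmulV : ∀ (r : R) (x : M), (IsLocalRing.residue R r) •
      (Submodule.Quotient.mk x : M ⧸ (maximalIdeal R • ⊤ : Submodule R M)) =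
      Submodule.Quotient.mk (r • x) := fun r x => rfl
  have hsmulW : ∀ (r : R) (y : N), (IsLocalRing.residue R r) •
      (Submodule.Quotient.mk y : N ⧸ (maximalIdeal R • ⊤ : Submodule R N)) =
      Submodule.Quotient.mk (r • y) := fun r y => rfl
  have hB0smul : ∀ (r : ResidueField R) (x : M ⧸ (maximalIdeal R • ⊤ : Submodule R M)),
      B0 (r • x) = r • B0 x := by
    intro r x
    obtain ⟨r0, rfl⟩ := IsLocalRing.residue_surjective r
    obtain ⟨x0, rfl⟩ := Submodule.Quotient.mk_surjective _ x
    rw [hsmulV, hB0mk, map_smul, ← hsmulW, hB0mk]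
  set Bbar : (M ⧸ (maximalIdeal R • ⊤ : Submodule R M)) →ₗ[ResidueField R]
      (N ⧸ (maximalIdeal R • ⊤ : Submodule R N)) :=
    { toFun := B0
      map_add' := map_add B0
      map_smul' := fun r x => hB0smul r x } with hBbardef
  have hBbarmk : ∀ y : M, Bbar (Submodule.Quotient.mk y) = Submodule.Quotient.mk (B y) :=
    fun y => hB0mk y
  -- the reduced Frobenius-semilinear map
  have hAwd : ∀ x y : M, (Submodule.Quotient.mk x :
      M ⧸ (maximalIdeal R • ⊤ : Submodule R M)) = Submodule.Quotient.mk y →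
      (Submodule.Quotient.mk (A x) :
        N ⧸ (maximalIdeal R • ⊤ : Submodule R N)) = Submodule.Quotient.mk (A y) := by
    intro x y hxy
    rw [Submodule.Quotient.eq] at hxy ⊢
    have h2 := hAfilt (x - y) hxy
    rwa [map_sub] at h2
  set Abar : (M ⧸ (maximalIdeal R • ⊤ : Submodule R M)) →
      (N ⧸ (maximalIdeal R • ⊤ : Submodule R N)) := fun v => Quotient.liftOn' v
    (fun x0 => Submodule.Quotient.mk (A x0))
    (fun x0 y0 h => hAwd x0 y0 (Quotient.sound' h)) with hAbardef
  have hAbarmk : ∀ x : M, Abar (Submodule.Quotient.mk x) = Submodule.Quotient.mk (A x) :=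
    fun x => rfl
  have hAadd : ∀ v w, Abar (v + w) = Abar v + Abar w := by
    intro v w
    obtain ⟨x, rfl⟩ := Submodule.Quotient.mk_surjective _ v
    obtain ⟨y, rfl⟩ := Submodule.Quotient.mk_surjective _ w
    rw [← Submodule.Quotient.mk_add, hAbarmk, hAbarmk, hAbarmk, map_add,
      Submodule.Quotient.mk_add]
  have hAsmul : ∀ (a : ResidueField R) (v : M ⧸ (maximalIdeal R • ⊤ : Submodule R M)),
      Abar (a • v) = a ^ p • Abar v := by
    intro a v
    obtain ⟨r, rfl⟩ := IsLocalRing.residue_surjective a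
    obtain ⟨x, rfl⟩ := Submodule.Quotient.mk_surjective _ v
    rw [hsmulV, hAbarmk, hAbarmk, ← map_pow, hsmulW, Submodule.Quotient.eq]
    exact hAsemi r x
  have hBsurj : Function.Surjective Bbar := by
    intro w
    obtain ⟨nn, rfl⟩ := Submodule.Quotient.mk_surjective _ w
    obtain ⟨x, hx⟩ := hB0 nn
    exact ⟨Submodule.Quotient.mk x, by rw [hBbarmk, Submodule.Quotient.eq]; exact hx⟩
  obtain ⟨v, hv⟩ := stmt8_key_surj hp Abar hAadd hAsmul Bbar hBsurj (Submodule.Quotient.mk n)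
  obtain ⟨x, rfl⟩ := Submodule.Quotient.mk_surjective _ v
  refine ⟨x, ?_⟩
  rw [hAbarmk, hBbarmk, ← Submodule.Quotient.mk_sub] at hv
  rw [show A x - B x - n = (A x - B x) - n from rfl, ← Submodule.Quotient.eq]
  exact hv
end Stmt8Part1

section Stmt8Main
variable {p : ℕ} {R : Type*} [CommRing R] [IsLocalRing R]
    [CharP R p] [IsAlgClosed (ResidueField R)]
    {M N : Type*} [AddCommGroup M] [AddCommGroup N] [Module R M] [Module R N]

private theorem stmt8_aux (hp : p.Prime)
    [IsNoetherianRing R] [IsAdicComplete (maximalIdeal R) R]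
    [Module.Finite R M] [Module.Finite R N]
    [IsAdicComplete (maximalIdeal R) M] [IsAdicComplete (maximalIdeal R) N]
    (A : M →+ N) (B : M →ₗ[R] N)
    (hAfilt : ∀ (i : ℕ), ∀ x ∈ (maximalIdeal R ^ i • ⊤ : Submodule R M),
      A x ∈ (maximalIdeal R ^ (p * i) • ⊤ : Submodule R N))
    (hAsemi : ∀ (r : R) (x : M), A (r • x) - r ^ p • A x ∈ (maximalIdeal R • ⊤ : Submodule R N))
    (hBgr : ∀ (i : ℕ), ∀ n ∈ (maximalIdeal R ^ i • ⊤ : Submodule R N),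
      ∃ x ∈ (maximalIdeal R ^ i • ⊤ : Submodule R M),
        B x - n ∈ (maximalIdeal R ^ (i + 1) • ⊤ : Submodule R N)) :
    Function.Surjective (fun x => A x - B x) := by
  classical
  intro n
  have htopM : (maximalIdeal R ^ 0 • ⊤ : Submodule R M) = ⊤ := by
    rw [pow_zero, Ideal.one_eq_top, Submodule.top_smul]
  have htopN : (maximalIdeal R ^ 0 • ⊤ : Submodule R N) = ⊤ := by
    rw [pow_zero, Ideal.one_eq_top, Submodule.top_smul]
  -- B maps the filtration into the filtration
  have hBmap : ∀ (i : ℕ), ∀ x ∈ (maximalIdeal R ^ i • ⊤ : Submodule R M),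
      B x ∈ (maximalIdeal R ^ i • ⊤ : Submodule R N) := by
    intro i x hx
    have h1 : B x ∈ Submodule.map B (maximalIdeal R ^ i • ⊤) := Submodule.mem_map_of_mem hx
    rw [Submodule.map_smul''] at h1
    have hle : (maximalIdeal R ^ i) • Submodule.map B ⊤ ≤ (maximalIdeal R ^ i • ⊤ : Submodule R N) :=
      smul_mono_right _ le_top
    exact hle h1
  -- the degree-zero instance of part1
  have hpart1 : ∀ nn : N, ∃ x : M,
      A x - B x - nn ∈ (maximalIdeal R • ⊤ : Submodule R N) := by
    refine stmt8_part1 hp A B ?_ hAsemi ?_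
    · intro x hx
      have h1 := hAfilt 1 x (by rwa [pow_one])
      have h2 : maximalIdeal R ^ (p * 1) ≤ maximalIdeal R ^ 1 :=
        Ideal.pow_le_pow_right (by have := hp.two_le; omega)
      rw [pow_one] at h2
      exact Submodule.smul_mono_left h2 h1
    · intro nn
      obtain ⟨x, -, hx2⟩ := hBgr 0 nn (by rw [htopN]; exact Submodule.mem_top)
      rw [zero_add, pow_one] at hx2
      exact ⟨x, hx2⟩
  -- one step of the successive approximation
  have step : ∀ (i : ℕ) (s : M), A s - B s - n ∈ (maximalIdeal R ^ i • ⊤ : Submodule R N) →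
      ∃ x : M, x ∈ (maximalIdeal R ^ i • ⊤ : Submodule R M) ∧
        A (s + x) - B (s + x) - n ∈ (maximalIdeal R ^ (i + 1) • ⊤ : Submodule R N) := by
    intro i s hs
    rcases Nat.eq_zero_or_pos i with rfl | hi
    · obtain ⟨x, hx⟩ := hpart1 (n - (A s - B s))
      refine ⟨x, by rw [htopM]; exact Submodule.mem_top, ?_⟩
      have heq : A (s + x) - B (s + x) - n = A x - B x - (n - (A s - B s)) := by
        rw [map_add, map_add]; abel
      rw [zero_add, pow_one, heq]
      exact hx
    · obtain ⟨x, hx1, hx2⟩ := hBgr i (A s - B s - n) hs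
      refine ⟨x, hx1, ?_⟩
      have heq : A (s + x) - B (s + x) - n = A x - (B x - (A s - B s - n)) := by
        rw [map_add, map_add]; abel
      have hle : maximalIdeal R ^ (p * i) ≤ maximalIdeal R ^ (i + 1) := by
        refine Ideal.pow_le_pow_right ?_
        calc i + 1 ≤ 2 * i := by omega
          _ ≤ p * i := Nat.mul_le_mul_right i hp.two_le
      have hmem1 : A x ∈ (maximalIdeal R ^ (i + 1) • ⊤ : Submodule R N) :=
        Submodule.smul_mono_left hle (hAfilt i x hx1)
      rw [heq]
      exact sub_mem hmem1 hx2
  choose X hX1 hX2 using step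
  -- the approximating sequence
  let f : ∀ i : ℕ, {s : M // A s - B s - n ∈ (maximalIdeal R ^ i • ⊤ : Submodule R N)} :=
    fun i => Nat.rec ⟨0, by rw [htopN]; exact Submodule.mem_top⟩
      (fun j sj => ⟨sj.1 + X j sj.1 sj.2, hX2 j sj.1 sj.2⟩) i
  have hfsucc : ∀ j, (f (j + 1)).1 = (f j).1 + X j (f j).1 (f j).2 := fun j => rfl
  have hdiff : ∀ j, (f (j + 1)).1 - (f j).1 ∈ (maximalIdeal R ^ j • ⊤ : Submodule R M) := by
    intro j
    rw [hfsucc, add_sub_cancel_left]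
    exact hX1 j (f j).1 (f j).2
  have hC : ∀ i l, (f (i + l)).1 - (f i).1 ∈ (maximalIdeal R ^ i • ⊤ : Submodule R M) := by
    intro i l
    induction l with
    | zero => rw [Nat.add_zero, sub_self]; exact Submodule.zero_mem _
    | succ l ih =>
      have h1 : (f (i + l + 1)).1 - (f i).1
          = ((f (i + l + 1)).1 - (f (i + l)).1) + ((f (i + l)).1 - (f i).1) := by abel
      rw [show i + (l + 1) = i + l + 1 from rfl, h1]
      refine Submodule.add_mem _ ?_ ih
      exact Submodule.smul_mono_left (Ideal.pow_le_pow_right (by have := hp.two_le; omega)) (hdiff (i + l))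
  have hCauchy : ∀ {i j : ℕ}, i ≤ j →
      (f i).1 ≡ (f j).1 [SMOD (maximalIdeal R ^ i • ⊤ : Submodule R M)] := by
    intro i j hij
    rw [SModEq.sub_mem]
    obtain ⟨l, rfl⟩ := Nat.exists_eq_add_of_le hij
    have := hC i l
    rw [← neg_sub]
    exact Submodule.neg_mem _ this
  obtain ⟨L, hL⟩ := IsPrecomplete.prec
    (IsAdicComplete.toIsPrecomplete (I := maximalIdeal R) (M := M)) @hCauchy
  refine ⟨L, ?_⟩
  have final : ∀ i : ℕ, A L - B L - n ∈ (maximalIdeal R ^ i • ⊤ : Submodule R N) := by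
    intro i
    have hd : L - (f i).1 ∈ (maximalIdeal R ^ i • ⊤ : Submodule R M) := by
      have h1 := SModEq.sub_mem.mp (hL i)
      rw [← neg_sub]
      exact Submodule.neg_mem _ h1
    have heq : A L - B L - n
        = (A (L - (f i).1) - B (L - (f i).1)) + (A (f i).1 - B (f i).1 - n) := by
      rw [map_sub, map_sub]; abel
    rw [heq]
    refine Submodule.add_mem _ (Submodule.sub_mem _ ?_ (hBmap i _ hd)) (f i).2
    exact Submodule.smul_mono_left (Ideal.pow_le_pow_right (Nat.le_mul_of_pos_left i hp.pos))
      (hAfilt i _ hd)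
  have hzero : A L - B L - n = 0 :=
    (IsAdicComplete.toIsHausdorff (I := maximalIdeal R) (M := N)).haus _
      (fun i => SModEq.zero.mpr (final i))
  show A L - B L = n
  exact sub_eq_zero.mp hzero

end Stmt8Main

/-- Let `M`, `N` be finitely generated modules over a complete Noetherian local
ring `(R, m)` of characteristic `p` with algebraically closed residue field `k`, each with the
`m`-adic filtration `Fᵢ = mⁱ • ⊤`.  Let `φ = A - B` where `B` is `R`-linear with all graded
pieces `grᵢ(B)` surjective, and `A` is additive with `A (mⁱM) ⊆ m^{pi} N` (so `grᵢ(A) = 0` for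
`i > 0`) and `gr₀(A)` Frobenius-semilinear over `k`.  Then `φ` is surjective. -/
theorem stmt8 {p : ℕ} (hp : p.Prime) {R : Type*} [CommRing R] [IsLocalRing R]
    [IsNoetherianRing R] [CharP R p] [IsAlgClosed (ResidueField R)]
    [IsAdicComplete (maximalIdeal R) R]
    {M N : Type*} [AddCommGroup M] [AddCommGroup N] [Module R M] [Module R N]
    [Module.Finite R M] [Module.Finite R N]
    [IsAdicComplete (maximalIdeal R) M] [IsAdicComplete (maximalIdeal R) N]
    (A : M →+ N) (B : M →ₗ[R] N)
    -- `A` respects the filtrations, mapping `F_i M` into `F_{p·i} N`: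
    (hAfilt : ∀ (i : ℕ), ∀ x ∈ (maximalIdeal R ^ i • ⊤ : Submodule R M),
      A x ∈ (maximalIdeal R ^ (p * i) • ⊤ : Submodule R N))
    -- `gr₀(A)` is Frobenius-semilinear over the residue field `k = R/m`:
    (hAsemi : ∀ (r : R) (x : M), A (r • x) - r ^ p • A x ∈ (maximalIdeal R • ⊤ : Submodule R N))
    -- all graded pieces `grᵢ(B) : mⁱM/m^{i+1}M → mⁱN/m^{i+1}N` are surjective:
    (hBgr : ∀ (i : ℕ), ∀ n ∈ (maximalIdeal R ^ i • ⊤ : Submodule R N),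
      ∃ x ∈ (maximalIdeal R ^ i • ⊤ : Submodule R M),
        B x - n ∈ (maximalIdeal R ^ (i + 1) • ⊤ : Submodule R N)) :
    Function.Surjective (fun x => A x - B x) :=
  stmt8_aux hp A B hAfilt hAsemi hBgr
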